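/- If A = [[A₁₁, A₁₂],[A₂₁, A₂₂]] is a symmetric positive definite n×n matrix with diagonal blocks A₁₁ (size n₁) and A₂₂ (size n₂), then 0 ≤ A₁₁^{−1/2} A₁₂ A₂₂^{−1} A₂₁ A₁₁^{−1/2} ≤ I_{n₁} in the positive semidefinite (Loewner) order. -/

import Mathlib

open Matrix

section PosSemidefSqrt

open scoped ComplexOrder

/-- The square root of a positive semidefinite matrix, as `Matrix.PosSemidef.sqrt` was defined in
the older Mathlib (it has since been removed). -/
noncomputable def Matrix.PosSemidef.sqrt {n : Type*} [Fintype n] [DecidableEq n] {𝕜 : Type*}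
    [RCLike 𝕜] {A : Matrix n n 𝕜} (hA : A.PosSemidef) : Matrix n n 𝕜 :=
  (hA.1.eigenvectorUnitary : Matrix n n 𝕜) * diagonal ((↑) ∘ (Real.sqrt ·) ∘ hA.1.eigenvalues) *
    (star hA.1.eigenvectorUnitary : Matrix n n 𝕜)

end PosSemidefSqrt

open scoped ComplexOrder in
theorem stmt7_sqrt_posSemidef {n : Type*} [Fintype n] [DecidableEq n] {𝕜 : Type*}
    [RCLike 𝕜] {A : Matrix n n 𝕜} (hA : A.PosSemidef) : hA.sqrt.PosSemidef := by
  have hD : (diagonal ((↑) ∘ (Real.sqrt ·) ∘ hA.1.eigenvalues) : Matrix n n 𝕜).PosSemidef := by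
    rw [posSemidef_diagonal_iff]
    intro i
    simp [Real.sqrt_nonneg]
  have := hD.mul_mul_conjTranspose_same (hA.1.eigenvectorUnitary : Matrix n n 𝕜)
  unfold Matrix.PosSemidef.sqrt
  rwa [star_eq_conjTranspose]

open scoped ComplexOrder in
theorem stmt7_sqrt_mul_self {n : Type*} [Fintype n] [DecidableEq n] {𝕜 : Type*}
    [RCLike 𝕜] {A : Matrix n n 𝕜} (hA : A.PosSemidef) : hA.sqrt * hA.sqrt = A := by
  unfold Matrix.PosSemidef.sqrt
  conv_rhs => rw [hA.1.spectral_theorem, Unitary.conjStarAlgAut_apply]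
  have hU : (star hA.1.eigenvectorUnitary : Matrix n n 𝕜) * (hA.1.eigenvectorUnitary : Matrix n n 𝕜)
      = 1 := Unitary.coe_star_mul_self _
  have hDD : (diagonal ((↑) ∘ (Real.sqrt ·) ∘ hA.1.eigenvalues) : Matrix n n 𝕜) *
      diagonal ((↑) ∘ (Real.sqrt ·) ∘ hA.1.eigenvalues) =
      diagonal (RCLike.ofReal ∘ hA.1.eigenvalues) := by
    rw [diagonal_mul_diagonal]
    congr 1
    funext i
    simp only [Function.comp_apply]
    rw [← RCLike.ofReal_mul, Real.mul_self_sqrt (hA.eigenvalues_nonneg i)]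
  calc _ = (hA.1.eigenvectorUnitary : Matrix n n 𝕜) *
        (diagonal ((↑) ∘ (Real.sqrt ·) ∘ hA.1.eigenvalues) *
        ((star hA.1.eigenvectorUnitary : Matrix n n 𝕜) * (hA.1.eigenvectorUnitary : Matrix n n 𝕜)) *
        diagonal ((↑) ∘ (Real.sqrt ·) ∘ hA.1.eigenvalues)) *
        (star hA.1.eigenvectorUnitary : Matrix n n 𝕜) := by simp only [Matrix.mul_assoc]
    _ = _ := by rw [hU, Matrix.mul_one, hDD]

/-- If `A = [[A₁₁, A₁₂],[A₁₂ᵀ, A₂₂]]` is symmetric positive definite, then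
`0 ≤ A₁₁^{-1/2} A₁₂ A₂₂⁻¹ A₁₂ᵀ A₁₁^{-1/2} ≤ I` in the Loewner order. -/
theorem stmt_7 {n₁ n₂ : ℕ}
    (A₁₁ : Matrix (Fin n₁) (Fin n₁) ℝ) (A₁₂ : Matrix (Fin n₁) (Fin n₂) ℝ)
    (A₂₂ : Matrix (Fin n₂) (Fin n₂) ℝ)
    (hA : (Matrix.fromBlocks A₁₁ A₁₂ A₁₂ᵀ A₂₂).PosDef)
    (h₁₁ : A₁₁.PosDef) :
    (h₁₁.posSemidef.sqrt⁻¹ * A₁₂ * A₂₂⁻¹ * A₁₂ᵀ * h₁₁.posSemidef.sqrt⁻¹).PosSemidef ∧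
    ((1 : Matrix (Fin n₁) (Fin n₁) ℝ) -
      h₁₁.posSemidef.sqrt⁻¹ * A₁₂ * A₂₂⁻¹ * A₁₂ᵀ * h₁₁.posSemidef.sqrt⁻¹).PosSemidef := by
  have hT : A₁₂ᴴ = A₁₂ᵀ := by ext i j; simp [Matrix.conjTranspose_apply]
  -- A₂₂ is positive definite
  have h₂₂ : A₂₂.PosDef := by
    constructor
    · have h := hA.1
      ext i j
      have := congrFun (congrFun h (Sum.inr i)) (Sum.inr j)
      simpa [Matrix.conjTranspose_apply, Matrix.fromBlocks] using this
    · intro x hx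
      exact (hA.submatrix Sum.inr_injective).2 hx
  haveI : Invertible A₂₂ := h₂₂.isUnit.invertible
  set S := h₁₁.posSemidef.sqrt with hSdef
  have hSps : S.PosSemidef := stmt7_sqrt_posSemidef h₁₁.posSemidef
  have hSS : S * S = A₁₁ := stmt7_sqrt_mul_self h₁₁.posSemidef
  have hdet : IsUnit S.det := by
    have h2 : S.det * S.det = A₁₁.det := by
      rw [← Matrix.det_mul, hSS]
    have hd : A₁₁.det ≠ 0 := ne_of_gt h₁₁.det_pos
    have hS0 : S.det ≠ 0 := by
      intro h
      rw [h, mul_zero] at h2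
      exact hd h2.symm
    exact hS0.isUnit
  have hSinvH : S⁻¹ᴴ = S⁻¹ := by
    rw [Matrix.conjTranspose_nonsing_inv, hSps.1]
  -- Schur complement is PSD
  have hschur : (A₁₁ - A₁₂ * A₂₂⁻¹ * A₁₂ᴴ).PosSemidef := by
    have hblock : (fromBlocks A₁₁ A₁₂ A₁₂ᴴ A₂₂).PosSemidef := by
      rw [hT]; exact hA.posSemidef
    exact (Matrix.PosDef.fromBlocks₂₂ A₁₁ A₁₂ h₂₂).mp hblock
  constructor
  · have heq : S⁻¹ * A₁₂ * A₂₂⁻¹ * A₁₂ᵀ * S⁻¹ =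
        (S⁻¹ * A₁₂) * A₂₂⁻¹ * (S⁻¹ * A₁₂)ᴴ := by
      rw [Matrix.conjTranspose_mul, hSinvH, hT, Matrix.mul_assoc]
    rw [heq]
    exact h₂₂.inv.posSemidef.mul_mul_conjTranspose_same _
  · have h1 : S⁻¹ * A₁₁ * S⁻¹ = 1 := by
      rw [← hSS, ← Matrix.mul_assoc, Matrix.nonsing_inv_mul _ hdet, Matrix.one_mul,
        Matrix.mul_nonsing_inv _ hdet]
    have key : (1 : Matrix (Fin n₁) (Fin n₁) ℝ) - S⁻¹ * A₁₂ * A₂₂⁻¹ * A₁₂ᵀ * S⁻¹ =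
        S⁻¹ * (A₁₁ - A₁₂ * A₂₂⁻¹ * A₁₂ᴴ) * (S⁻¹)ᴴ := by
      rw [hSinvH, hT, Matrix.mul_sub, Matrix.sub_mul, h1]
      simp [Matrix.mul_assoc]
    rw [key]
    exact hschur.mul_mul_conjTranspose_same _
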